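/- Let G be a finite simple graph on vertex set V. Then G contains no bipartite connected component if and only if for every vertex weight function w_V : V → ℝ there exists an edge weight function w_E : edgeSet(G) → ℝ such that for every vertex v, w_V(v) = Σ_{e ∈ edgeSet(G), v ∈ e} w_E(e). -/

import Mathlib

open SimpleGraph Finset

private lemma sum_mem_sym2 {V : Type*} [Fintype V] [DecidableEq V] (s : V → ℝ) {a b : V}
    (hab : a ≠ b) :
    (∑ v : V, if v ∈ (s(a, b) : Sym2 V) then s v else 0) = s a + s b := by
  have h : ∀ v : V, (if v ∈ (s(a, b) : Sym2 V) then s v else 0)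
      = (if v = a then s v else 0) + (if v = b then s v else 0) := by
    intro v
    by_cases h1 : v = a <;> by_cases h2 : v = b <;> simp_all [Sym2.mem_iff]
  simp only [h, Finset.sum_add_distrib, Finset.sum_ite_eq', Finset.mem_univ, if_pos]

private lemma swap_sum {V : Type*} [Fintype V] [DecidableEq V] (G : SimpleGraph V)
    [DecidableRel G.Adj] (s : V → ℝ) (wE : G.edgeSet → ℝ) :
    ∑ v : V, s v * (∑ e : G.edgeSet, if v ∈ (e : Sym2 V) then wE e else 0)
      = ∑ e : G.edgeSet, wE e * (∑ v : V, if v ∈ (e : Sym2 V) then s v else 0) := by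
  simp only [Finset.mul_sum]
  rw [Finset.sum_comm]
  congr 1; ext e; congr 1; ext v
  by_cases h : v ∈ (e : Sym2 V) <;> simp [h, mul_comm]

theorem no_bipartite_component_iff_basic {V : Type*} [Fintype V] [DecidableEq V]
    (G : SimpleGraph V) [DecidableRel G.Adj] :
    (∀ c : G.ConnectedComponent, ¬ (G.induce c.supp).Colorable 2) ↔
      ∀ w : V → ℝ, ∃ wE : G.edgeSet → ℝ,
        ∀ v : V, w v = ∑ e : G.edgeSet, if v ∈ (e : Sym2 V) then wE e else 0 := by
  constructor
  · -- forward direction: no bipartite component → surjective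
    intro h
    set T : (G.edgeSet → ℝ) →ₗ[ℝ] EuclideanSpace ℝ V :=
      (WithLp.linearEquiv 2 ℝ (V → ℝ)).symm.toLinearMap ∘ₗ
      { toFun := fun wE v => ∑ e : G.edgeSet, if v ∈ (e : Sym2 V) then wE e else 0
        map_add' := by
          intro f g; funext v
          show _ = (fun v => ∑ e : G.edgeSet, if v ∈ (e : Sym2 V) then f e else 0) v
            + (fun v => ∑ e : G.edgeSet, if v ∈ (e : Sym2 V) then g e else 0) v
          simp only [← Finset.sum_add_distrib]
          apply Finset.sum_congr rfl; intro e _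
          by_cases hv : v ∈ (e : Sym2 V) <;> simp [hv]
        map_smul' := by
          intro c f; funext v
          show _ = c • (fun v => ∑ e : G.edgeSet, if v ∈ (e : Sym2 V) then f e else 0) v
          simp only [smul_eq_mul, Finset.mul_sum]
          apply Finset.sum_congr rfl; intro e _
          by_cases hv : v ∈ (e : Sym2 V) <;> simp [hv] } with hT
    suffices hsurj : Function.Surjective T by
      intro w
      obtain ⟨wE, hwE⟩ := hsurj (WithLp.toLp 2 w)
      exact ⟨wE, fun v => (congrArg (fun y => y v) hwE).symm⟩
    by_contra hns
    rw [← LinearMap.range_eq_top] at hns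
    have hK : (LinearMap.range T)ᗮ ≠ ⊥ := fun hb =>
      hns (Submodule.orthogonal_eq_bot_iff.mp hb)
    obtain ⟨x, hxmem, hx0⟩ := (Submodule.ne_bot_iff _).mp hK
    -- edge relation : x a + x b = 0 on every edge
    have hedge : ∀ a b : V, G.Adj a b → x a + x b = 0 := by
      intro a b hab
      have he : s(a, b) ∈ G.edgeSet := G.mem_edgeSet.mpr hab
      have hne : a ≠ b := G.ne_of_adj hab
      set wE : G.edgeSet → ℝ := Pi.single ⟨s(a, b), he⟩ 1 with hwEdef
      have hmem : T wE ∈ LinearMap.range T := ⟨wE, rfl⟩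
      have hinner : (inner ℝ (T wE) x : ℝ) = 0 :=
        (Submodule.mem_orthogonal _ _).mp hxmem _ hmem
      rw [PiLp.inner_apply] at hinner
      have hTval : ∀ v : V, (T wE) v
          = ∑ e : G.edgeSet, if v ∈ (e : Sym2 V) then wE e else 0 := fun v => rfl
      have hsum : (∑ v : V, x v * (∑ e : G.edgeSet,
          if v ∈ (e : Sym2 V) then wE e else 0)) = 0 := by
        have h2 : (∑ v : V, x v * (T wE v)) = (∑ i : V, inner ℝ (T wE i) (x i) : ℝ) := by
          apply Finset.sum_congr rfl; intro v _
          rw [RCLike.inner_apply', RCLike.conj_to_real, mul_comm]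
        have h3 : (∑ v : V, x v * (T wE v)) = 0 := h2.trans hinner
        exact h3
      rw [swap_sum] at hsum
      have hsingle : ∀ e : G.edgeSet, wE e * (∑ v : V, if v ∈ (e : Sym2 V) then x v else 0)
          = if e = ⟨s(a, b), he⟩ then
              (∑ v : V, if v ∈ (e : Sym2 V) then x v else 0) else 0 := by
        intro e
        by_cases hee : e = ⟨s(a, b), he⟩ <;> simp [hwEdef, hee, Pi.single_apply]
      rw [Finset.sum_congr rfl (fun e _ => hsingle e), Finset.sum_ite_eq'] at hsum
      simp only [Finset.mem_univ, if_true] at hsum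
      rwa [sum_mem_sym2 x hne] at hsum
    -- pick a vertex where x is nonzero
    have : ∃ v₀ : V, x v₀ ≠ 0 := by
      by_contra hall
      push_neg at hall
      exact hx0 (PiLp.ext hall)
    obtain ⟨v₀, hv₀⟩ := this
    -- x is ± x v₀ on the component of v₀
    have key : ∀ a b : V, G.Walk a b → x b = x a ∨ x b = -x a := by
      intro a b p
      induction p with
      | nil => left; rfl
      | @cons u v w hadj q ih =>
        have h1 : x v = -x u := by have := hedge u v hadj; linarith
        rcases ih with h2 | h2
        · right; rw [h2, h1]
        · left; rw [h2, h1, neg_neg]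
    apply h (G.connectedComponentMk v₀)
    refine ⟨SimpleGraph.Coloring.mk (fun u => if 0 < x u.val then 0 else 1) ?_⟩
    rintro ⟨u, hu⟩ ⟨w, hw⟩ huw
    have hadj : G.Adj u w := huw
    have hsum0 : x u + x w = 0 := hedge u w hadj
    have hux : x u ≠ 0 := by
      rw [SimpleGraph.ConnectedComponent.mem_supp_iff] at hu
      obtain ⟨p⟩ := SimpleGraph.ConnectedComponent.exact hu.symm
      rcases key v₀ u p with h2 | h2 <;> rw [h2] <;> simpa
    simp only [ne_eq]
    by_cases h1 : 0 < x u <;> by_cases h2 : 0 < x w <;>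
      simp only [h1, h2, if_true, if_false] <;> first
        | linarith
        | (intro hcon; exact absurd hcon (by decide))
        | (intro hcon; exact hux (by push_neg at h1 h2; linarith))
  · -- backward direction
    intro h c hcol
    obtain ⟨C⟩ := hcol
    obtain ⟨v₀, hv₀c⟩ := Quot.exists_rep c
    have hv₀ : v₀ ∈ c.supp := by
      rw [SimpleGraph.ConnectedComponent.mem_supp_iff]; exact hv₀c
    classical
    set s : V → ℝ := fun u =>
      if hu : u ∈ c.supp then (if C ⟨u, hu⟩ = C ⟨v₀, hv₀⟩ then 1 else -1) else 0 with hs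
    obtain ⟨wE, hwE⟩ := h (fun u => if u = v₀ then (1 : ℝ) else 0)
    have hA : (∑ v : V, s v * (if v = v₀ then (1 : ℝ) else 0)) = 1 := by
      have : ∀ v : V, s v * (if v = v₀ then (1 : ℝ) else 0)
          = if v = v₀ then s v else 0 := by
        intro v; by_cases hv : v = v₀ <;> simp [hv]
      rw [Finset.sum_congr rfl (fun v _ => this v), Finset.sum_ite_eq']
      simp [hs, hv₀]
      exact hv₀c
    have hB : (∑ v : V, s v * (if v = v₀ then (1 : ℝ) else 0)) = 0 := by
      have : ∀ v : V, (if v = v₀ then (1 : ℝ) else 0)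
          = ∑ e : G.edgeSet, if v ∈ (e : Sym2 V) then wE e else 0 := fun v => hwE v
      rw [Finset.sum_congr rfl (fun v _ => by rw [this v]), swap_sum]
      apply Finset.sum_eq_zero
      rintro ⟨e, he⟩ _
      induction e with
      | _ a b =>
        have hab : G.Adj a b := G.mem_edgeSet.mp he
        have hne : a ≠ b := G.ne_of_adj hab
        rw [sum_mem_sym2 s hne]
        have hcomp : G.connectedComponentMk a = G.connectedComponentMk b :=
          SimpleGraph.ConnectedComponent.sound hab.reachable
        by_cases ha : a ∈ c.supp
        · have hb : b ∈ c.supp := by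
            rw [SimpleGraph.ConnectedComponent.mem_supp_iff] at ha ⊢
            rw [← hcomp]; exact ha
          have hadj : (G.induce c.supp).Adj ⟨a, ha⟩ ⟨b, hb⟩ := hab
          have hCne : C ⟨a, ha⟩ ≠ C ⟨b, hb⟩ := C.valid hadj
          have hfin : ∀ p q r : Fin 2, p ≠ q → ((p = r) ↔ ¬ (q = r)) := by decide
          have hsa : s a = if C ⟨a, ha⟩ = C ⟨v₀, hv₀⟩ then 1 else -1 := by
            simp only [hs]; exact dif_pos ha
          have hsb : s b = if C ⟨b, hb⟩ = C ⟨v₀, hv₀⟩ then 1 else -1 := by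
            simp only [hs]; exact dif_pos hb
          rw [hsa, hsb]
          by_cases hca : C ⟨a, ha⟩ = C ⟨v₀, hv₀⟩
          · rw [if_pos hca, if_neg ((hfin _ _ _ hCne).mp hca)]; ring
          · rw [if_neg hca,
              if_pos (not_not.mp (fun hcb => hca ((hfin _ _ _ hCne).mpr hcb)))]
            ring
        · have hb : b ∉ c.supp := by
            rw [SimpleGraph.ConnectedComponent.mem_supp_iff] at ha ⊢
            rw [← hcomp]; exact ha
          have hsa : s a = 0 := by simp only [hs]; exact dif_neg ha
          have hsb : s b = 0 := by simp only [hs]; exact dif_neg hb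
          rw [hsa, hsb]; ring
    rw [hA] at hB
    exact one_ne_zero hB
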